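/- Let F be a finite field with q = |F| elements and let n, N be natural numbers with n ≤ N. Then the number of orbits of the action of GL(N,F) on the n-element subsets of the vector space F^N satisfies f_n(GL(N,F)) ≤ (n+1) · q^{⌊n²/4⌋}. -/

import Mathlib

open Matrix MulAction Pointwise

/-- The action of `GL(N,F)` on `F^N` by matrix-vector multiplication. -/
instance glVecAction {F : Type*} [Field F] {N : ℕ} :
    MulAction (GL (Fin N) F) (Fin N → F) where
  smul g v := (g : Matrix (Fin N) (Fin N) F).mulVec v
  one_smul v := by
    show ((1 : GL (Fin N) F) : Matrix (Fin N) (Fin N) F).mulVec v = v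
    simp
  mul_smul g h v := by
    show ((g * h : GL (Fin N) F) : Matrix (Fin N) (Fin N) F).mulVec v
      = (g : Matrix (Fin N) (Fin N) F).mulVec ((h : Matrix (Fin N) (Fin N) F).mulVec v)
    simp [Matrix.mulVec_mulVec]

/-- The number of orbits of a `G`-action meeting a set `P` of states; for a `G`-invariant
`P` this is the number of orbits of `G` on `P`. -/
noncomputable def numOrbitsOn (G : Type*) {X : Type*} [Group G] [MulAction G X]
    (P : Set X) : ℕ :=
  Nat.card (Quotient.mk (MulAction.orbitRel G X) '' P)

/-- A linear automorphism of `F^N` as an element of `GL(N,F)`. -/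
noncomputable def equivToGL {F : Type*} [Field F] [DecidableEq F] {N : ℕ}
    (e : (Fin N → F) ≃ₗ[F] (Fin N → F)) : GL (Fin N) F :=
  ⟨LinearMap.toMatrix' (e : (Fin N → F) →ₗ[F] (Fin N → F)),
   LinearMap.toMatrix' (e.symm : (Fin N → F) →ₗ[F] (Fin N → F)),
   by rw [← LinearMap.toMatrix'_comp, LinearEquiv.comp_coe, LinearEquiv.symm_trans_self,
       LinearEquiv.refl_toLinearMap, LinearMap.toMatrix'_id],
   by rw [← LinearMap.toMatrix'_comp, LinearEquiv.comp_coe, LinearEquiv.self_trans_symm,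
       LinearEquiv.refl_toLinearMap, LinearMap.toMatrix'_id]⟩

lemma equivToGL_smul {F : Type*} [Field F] [DecidableEq F] {N : ℕ}
    (e : (Fin N → F) ≃ₗ[F] (Fin N → F)) (v : Fin N → F) :
    equivToGL e • v = e v := by
  show ((equivToGL e : GL (Fin N) F) : Matrix (Fin N) (Fin N) F).mulVec v = e v
  show (LinearMap.toMatrix' (e : (Fin N → F) →ₗ[F] (Fin N → F))).mulVec v = e v
  rw [← Matrix.toLin'_apply, Matrix.toLin'_toMatrix']
  rfl

/-- Any linearly independent family of size `r ≤ N` in `F^N` can be mapped onto the first `r`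
standard basis vectors by a linear automorphism. -/
lemma exists_equiv_basis {F : Type*} [Field F] {N r : ℕ} (hr : r ≤ N)
    (b : Fin r → (Fin N → F)) (hb : LinearIndependent F b) :
    ∃ e : (Fin N → F) ≃ₗ[F] (Fin N → F),
      ∀ i : Fin r, e (b i) = Pi.basisFun F (Fin N) (Fin.castLE hr i) := by
  classical
  set s : Set (Fin N → F) := Set.range b with hsdef
  have hs : LinearIndepOn F id s := (linearIndepOn_id_range_iff hb.injective).mpr hb
  set t : Set (Fin N → F) := hs.extend (Set.subset_univ s) with htdef
  have hst : s ⊆ t := hs.subset_extend _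
  let B : Module.Basis t F (Fin N → F) := Module.Basis.extend hs
  haveI : Fintype t := FiniteDimensional.fintypeBasisIndex B
  haveI : Fintype s := Set.Finite.fintype (Set.finite_range b)
  haveI : Fintype ↥(t \ s) := Set.Finite.fintype ((Set.toFinite t).subset Set.diff_subset)
  have hcardt : Fintype.card t = N := by
    have h1 := Module.finrank_eq_card_basis B
    rw [Module.finrank_pi] at h1
    simpa using h1.symm
  have hcards : Fintype.card s = r := by
    rw [Set.card_range_of_injective hb.injective, Fintype.card_fin]
  let eqr : Fin r ≃ s := Equiv.ofInjective b hb.injective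
  have hcd : Fintype.card ↥(t \ s) = N - r := by
    have := Fintype.card_congr (Equiv.Set.sumDiffSubset hst).symm
    rw [hcardt, Fintype.card_sum, hcards] at this
    omega
  let eqd : Fin (N - r) ≃ ↥(t \ s) := (Fintype.equivFinOfCardEq hcd).symm
  let σ : Fin N ≃ t :=
    (finCongr (by omega : N = r + (N - r))).trans
      (finSumFinEquiv.symm.trans
        ((Equiv.sumCongr eqr eqd).trans (Equiv.Set.sumDiffSubset hst)))
  have hσ : ∀ i : Fin r, σ (Fin.castLE hr i) = Set.inclusion hst (eqr i) := by
    intro i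
    have h1 : (finCongr (by omega : N = r + (N - r))) (Fin.castLE hr i)
        = Fin.castAdd (N - r) i := by ext; simp
    show (Equiv.Set.sumDiffSubset hst) ((Equiv.sumCongr eqr eqd)
        (finSumFinEquiv.symm ((finCongr (by omega : N = r + (N - r))) (Fin.castLE hr i))))
      = Set.inclusion hst (eqr i)
    rw [h1, finSumFinEquiv_symm_apply_castAdd]
    simp [Equiv.Set.sumDiffSubset_apply_inl]
  let c : Module.Basis (Fin N) F (Fin N → F) := B.reindex σ.symm
  have hc : ∀ i : Fin r, c (Fin.castLE hr i) = b i := by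
    intro i
    rw [Module.Basis.reindex_apply, Equiv.symm_symm, hσ i, Module.Basis.extend_apply_self]
    rfl
  refine ⟨c.equiv (Pi.basisFun F (Fin N)) (Equiv.refl _), fun i => ?_⟩
  rw [← hc i, Module.Basis.equiv_apply, Equiv.refl_apply]

/-- A vector in the span of the first `r` standard basis vectors has vanishing coordinates
from `r` on. -/
lemma coord_zero {F : Type*} [Field F] [DecidableEq F] {N r : ℕ} (hr : r ≤ N) {v : Fin N → F}
    (hv : v ∈ Submodule.span F
      (Set.range fun i : Fin r => Pi.basisFun F (Fin N) (Fin.castLE hr i)))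
    (j : Fin N) (hj : r ≤ (j : ℕ)) : v j = 0 := by
  rw [Submodule.mem_span_range_iff_exists_fun] at hv
  obtain ⟨c, hc⟩ := hv
  rw [← hc, Finset.sum_apply]
  refine Finset.sum_eq_zero fun i _ => ?_
  have hne : j ≠ Fin.castLE hr i := by
    intro h
    have h2 : (j : ℕ) = (i : ℕ) := by rw [h]; rfl
    omega
  simp [Pi.basisFun_apply, Pi.single_eq_of_ne hne]

/-- The cardinality of the parameter space. -/
lemma card_D_le {F : Type*} [Fintype F] [Nonempty F] (n : ℕ) :
    Fintype.card (Σ r : Fin (n+1), (Fin (n - (r : ℕ)) → Fin (r : ℕ) → F))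
      ≤ (n + 1) * Fintype.card F ^ (n ^ 2 / 4) := by
  rw [Fintype.card_sigma]
  have hb : ∀ r : Fin (n+1),
      Fintype.card (Fin (n - (r : ℕ)) → Fin (r : ℕ) → F) ≤ Fintype.card F ^ (n ^ 2 / 4) := by
    intro r
    classical
    rw [Fintype.card_fun, Fintype.card_fun, Fintype.card_fin, Fintype.card_fin, ← pow_mul]
    refine Nat.pow_le_pow_right Fintype.card_pos ?_
    rw [Nat.le_div_iff_mul_le (by norm_num)]
    have hr : (r : ℕ) ≤ n := Nat.lt_succ_iff.mp r.isLt
    set a := (r : ℕ)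
    set m := n - a
    have hn : n = a + m := by omega
    rw [hn]
    nlinarith [two_mul_le_add_sq a m]
  calc ∑ r : Fin (n+1), Fintype.card (Fin (n - (r : ℕ)) → Fin (r : ℕ) → F)
      ≤ ∑ _r : Fin (n+1), Fintype.card F ^ (n ^ 2 / 4) := Finset.sum_le_sum fun r _ => hb r
    _ = (n + 1) * Fintype.card F ^ (n ^ 2 / 4) := by
        rw [Finset.sum_const, Finset.card_univ, Fintype.card_fin, smul_eq_mul]

/-- The canonical finite subset of `F^N` associated to a parameter: the first `r` standard
basis vectors together with `n - r` vectors supported in the first `r` coordinates. -/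
noncomputable def psi {F : Type*} [Field F] [DecidableEq F] {N n : ℕ} (hn : n ≤ N)
    (d : Σ r : Fin (n+1), Fin (n - (r : ℕ)) → Fin (r : ℕ) → F) : Finset (Fin N → F) :=
  (Finset.univ.image fun i : Fin (d.1 : ℕ) =>
      Pi.basisFun F (Fin N) (Fin.castLE ((Nat.lt_succ_iff.mp d.1.isLt).trans hn) i))
  ∪ (Finset.univ.image fun k : Fin (n - (d.1 : ℕ)) =>
      fun j : Fin N => if h : (j : ℕ) < (d.1 : ℕ) then d.2 k ⟨(j : ℕ), h⟩ else 0)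

set_option maxHeartbeats 1000000 in
/-- Every `n`-element subset of `F^N` is the image of some canonical set under a linear
automorphism. -/
lemma exists_psi {F : Type*} [Field F] [DecidableEq F] {N n : ℕ} (hn : n ≤ N)
    (S : Finset (Fin N → F)) (hS : S.card = n) :
    ∃ (d : Σ r : Fin (n+1), Fin (n - (r : ℕ)) → Fin (r : ℕ) → F)
      (e : (Fin N → F) ≃ₗ[F] (Fin N → F)),
      psi hn d = S.image e := by
  classical
  obtain ⟨bs, hb1, hb2, hb3⟩ := exists_linearIndependent F ((S : Set (Fin N → F)))
  have hbfin : bs.Finite := S.finite_toSet.subset hb1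
  obtain ⟨B, hcoe⟩ : ∃ B : Finset (Fin N → F), (B : Set (Fin N → F)) = bs :=
    ⟨hbfin.toFinset, hbfin.coe_toFinset⟩
  subst hcoe
  have hBS : B ⊆ S := by
    intro x hx
    exact Finset.mem_coe.mp (hb1 hx)
  have hrn : B.card ≤ n := hS ▸ Finset.card_le_card hBS
  have hrN : B.card ≤ N := hrn.trans hn
  set r : ℕ := B.card with hrdef
  -- an independent family enumerating B
  let eqv : Fin r ≃ (B : Set (Fin N → F)) := B.equivFin.symm
  let b : Fin r → (Fin N → F) := fun i => (eqv i : Fin N → F)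
  have hbind : LinearIndependent F b := hb3.comp eqv eqv.injective
  have hbrange : Set.range b = (B : Set (Fin N → F)) := by
    ext x
    constructor
    · rintro ⟨i, rfl⟩; exact (eqv i).2
    · intro hx
      refine ⟨eqv.symm ⟨x, hx⟩, ?_⟩
      show ((eqv (eqv.symm ⟨x, hx⟩)) : Fin N → F) = x
      rw [Equiv.apply_symm_apply]
  obtain ⟨e, he⟩ := exists_equiv_basis hrN b hbind
  -- the complement
  set C : Finset (Fin N → F) := S \ B with hCdef
  have hCcard : C.card = n - r := by rw [hCdef, Finset.card_sdiff_of_subset hBS, hS]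
  let eqw : Fin (n - r) ≃ C := (Fin.castOrderIso hCcard.symm).toEquiv.trans C.equivFin.symm
  let c : Fin (n - r) → (Fin N → F) := fun k => (eqw k : Fin N → F)
  -- coordinates of images of C vanish beyond r
  have hmem : ∀ k, e (c k) ∈ Submodule.span F
      (Set.range fun i : Fin r => Pi.basisFun F (Fin N) (Fin.castLE hrN i)) := by
    intro k
    have hckS : c k ∈ S := (Finset.mem_sdiff.mp (eqw k).2).1
    have h1 : c k ∈ Submodule.span F (Set.range b) := by
      rw [hbrange, hb2]
      exact Submodule.subset_span hckS
    have h2 : e (c k) ∈ Submodule.map (e : (Fin N → F) →ₗ[F] (Fin N → F))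
        (Submodule.span F (Set.range b)) := Submodule.mem_map_of_mem h1
    rw [Submodule.map_span, ← Set.range_comp] at h2
    simp only [LinearEquiv.coe_coe] at h2
    have hcomp : (⇑e ∘ b) = fun i => Pi.basisFun F (Fin N) (Fin.castLE hrN i) :=
      funext fun i => he i
    rwa [hcomp] at h2
  -- the data
  refine ⟨⟨⟨r, Nat.lt_succ_of_le hrn⟩,
      fun k j => e (c k) (Fin.castLE hrN j)⟩, e, ?_⟩
  have hSsplit : S = B ∪ C := (Finset.union_sdiff_of_subset hBS).symm
  show (Finset.univ.image fun i : Fin r =>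
      Pi.basisFun F (Fin N) (Fin.castLE hrN i))
    ∪ (Finset.univ.image fun k : Fin (n - r) =>
      fun j : Fin N => if h : (j : ℕ) < r then e (c k) (Fin.castLE hrN ⟨(j : ℕ), h⟩) else 0)
    = S.image e
  rw [hSsplit, Finset.image_union]
  congr 1
  · -- basis part
    have hBim : B = Finset.univ.image b := by
      ext x
      rw [Finset.mem_image]
      constructor
      · intro hx
        refine ⟨eqv.symm ⟨x, hx⟩, Finset.mem_univ _, ?_⟩
        show ((eqv (eqv.symm ⟨x, hx⟩)) : Fin N → F) = x
        rw [Equiv.apply_symm_apply]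
      · rintro ⟨i, -, rfl⟩; exact (eqv i).2
    rw [hBim, Finset.image_image]
    apply Finset.image_congr
    intro i _
    exact (he i).symm
  · -- complement part
    have hCim : C = Finset.univ.image c := by
      ext x
      rw [Finset.mem_image]
      constructor
      · intro hx
        refine ⟨eqw.symm ⟨x, hx⟩, Finset.mem_univ _, ?_⟩
        show ((eqw (eqw.symm ⟨x, hx⟩)) : Fin N → F) = x
        rw [Equiv.apply_symm_apply]
      · rintro ⟨k, -, rfl⟩; exact (eqw k).2
    rw [hCim, Finset.image_image]
    apply Finset.image_congr
    intro k _
    funext j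
    by_cases h : (j : ℕ) < r
    · simp only [dif_pos h]
      have hj : Fin.castLE hrN (⟨(j : ℕ), h⟩ : Fin r) = j := by ext; rfl
      rw [hj]
      rfl
    · simp only [dif_neg h]
      exact (coord_zero hrN (hmem k) j (le_of_not_gt h)).symm

set_option synthInstance.maxHeartbeats 400000 in
/-- The number of orbits of `GL(N,F)` on `n`-element subsets of `F^N` is at most
`(n+1) * q^⌊n²/4⌋`. -/
theorem gl_orbits_on_subsets_le (F : Type*) [Field F] [Fintype F] [DecidableEq F]
    (N n : ℕ) (hn : n ≤ N) :
    numOrbitsOn (GL (Fin N) F) {S : Finset (Fin N → F) | S.card = n}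
      ≤ (n + 1) * Fintype.card F ^ (n ^ 2 / 4) := by
  classical
  haveI : Nonempty F := ⟨0⟩
  let f : (Σ r : Fin (n+1), Fin (n - (r : ℕ)) → Fin (r : ℕ) → F) →
      Quotient (MulAction.orbitRel (GL (Fin N) F) (Finset (Fin N → F))) :=
    fun d => Quotient.mk (MulAction.orbitRel (GL (Fin N) F) (Finset (Fin N → F))) (psi hn d)
  have hkey : Quotient.mk (MulAction.orbitRel (GL (Fin N) F) (Finset (Fin N → F))) ''
      {S : Finset (Fin N → F) | S.card = n} ⊆ Set.range f := by
    rintro x ⟨S, hScard, rfl⟩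
    obtain ⟨d, e, hd⟩ := exists_psi hn S hScard
    refine ⟨d, ?_⟩
    apply Quotient.sound
    show psi hn d ∈ MulAction.orbit (GL (Fin N) F) S
    rw [hd]
    have himg : S.image ⇑e = (equivToGL e • S : Finset (Fin N → F)) := by
      rw [Finset.smul_finset_def]
      apply Finset.image_congr
      intro v _
      exact (equivToGL_smul e v).symm
    rw [himg]
    exact MulAction.mem_orbit S (equivToGL e)
  calc numOrbitsOn (GL (Fin N) F) {S : Finset (Fin N → F) | S.card = n}
      ≤ Nat.card (Set.range f) := Nat.card_mono (Set.finite_range f) hkey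
    _ ≤ Nat.card (Σ r : Fin (n+1), Fin (n - (r : ℕ)) → Fin (r : ℕ) → F) :=
        Finite.card_range_le f
    _ = Fintype.card (Σ r : Fin (n+1), Fin (n - (r : ℕ)) → Fin (r : ℕ) → F) :=
        Nat.card_eq_fintype_card
    _ ≤ (n + 1) * Fintype.card F ^ (n ^ 2 / 4) := card_D_le n
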